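/- Let E be a finite directed graph with no sinks in which no two distinct cycles share a common vertex. Define a relation on cycles by c ≥ c' if there is a path from a vertex of c to a vertex of c'. Then ≥ is a partial order on the set of cycles of E, and every cycle minimal with respect to ≥ has no exits. In particular, E contains at least one cycle without exits. -/

import Mathlib

/-- Reachability by a directed path (possibly of length `0`). -/
def Reach {V E : Type*} (s r : E → V) : V → V → Prop :=
  Relation.ReflTransGen fun a b => ∃ e : E, s e = a ∧ r e = b

/-- A cycle in the directed graph `(V, E, s, r)`: a closed path passing through no
vertex twice. -/
structure GCycle {V E : Type*} (s r : E → V) where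
  n : ℕ
  es : Fin (n + 1) → E
  chain : ∀ i : Fin n, r (es i.castSucc) = s (es i.succ)
  closed : r (es (Fin.last n)) = s (es 0)
  inj : Function.Injective fun i => s (es i)

/-- The set of vertices of a cycle. -/
def GCycle.verts {V E : Type*} {s r : E → V} (c : GCycle s r) : Set V :=
  Set.range fun i => s (c.es i)

/-- The set of edges of a cycle; two cycles are rotations of each other iff they have
the same edge set. -/
def GCycle.edges {V E : Type*} {s r : E → V} (c : GCycle s r) : Set E :=
  Set.range c.es

/-- `c ≥ c'` iff there is a path from a vertex of `c` to a vertex of `c'`. -/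
def CycGe {V E : Type*} {s r : E → V} (c c' : GCycle s r) : Prop :=
  ∃ u ∈ c.verts, ∃ w ∈ c'.verts, Reach s r u w

section helpers
variable {V E : Type*} {s r : E → V}

lemma GCycle.step (c : GCycle s r) (i : Fin (c.n + 1)) :
    r (c.es i) = s (c.es (i + 1)) := by
  rcases Nat.lt_or_ge i.val c.n with h | h
  · have hc := c.chain ⟨i.val, h⟩
    have h1 : (⟨i.val, h⟩ : Fin c.n).castSucc = i := by ext; simp
    have h2 : (⟨i.val, h⟩ : Fin c.n).succ = i + 1 := by
      have hm : (i.val + 1) % (c.n + 1) = i.val + 1 := Nat.mod_eq_of_lt (by omega)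
      ext; simp [Fin.add_def, hm]
    rw [h1, h2] at hc; exact hc
  · have hi : i = Fin.last c.n := by
      ext; simp only [Fin.val_last]; omega
    have h0 : (Fin.last c.n) + 1 = (0 : Fin (c.n + 1)) := by
      ext; simp [Fin.add_def]
    rw [hi, h0]; exact c.closed

lemma GCycle.mem_verts_of_mem_edges (c : GCycle s r) {e : E} (he : e ∈ c.edges) :
    s e ∈ c.verts ∧ r e ∈ c.verts := by
  obtain ⟨i, rfl⟩ := he
  exact ⟨⟨i, rfl⟩, by rw [c.step i]; exact ⟨i + 1, rfl⟩⟩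

lemma GCycle.verts_eq (c : GCycle s r) : c.verts = s '' c.edges := by
  have : (fun i => s (c.es i)) = s ∘ c.es := rfl
  rw [GCycle.verts, GCycle.edges, this, Set.range_comp]

open Fin.NatCast in
lemma GCycle.reach_add (c : GCycle s r) (i : Fin (c.n + 1)) (k : ℕ) :
    Reach s r (s (c.es i)) (s (c.es (i + (k : Fin (c.n + 1))))) := by
  induction k with
  | zero => simp only [Nat.cast_zero, add_zero]; exact Relation.ReflTransGen.refl
  | succ k ih =>
    have hstep : Reach s r (s (c.es (i + (k : Fin (c.n+1)))))
        (s (c.es (i + (k : Fin (c.n+1)) + 1))) := by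
      refine Relation.ReflTransGen.single ⟨c.es (i + (k : Fin (c.n+1))), rfl, ?_⟩
      exact c.step _
    have : ((k + 1 : ℕ) : Fin (c.n + 1)) = (k : Fin (c.n+1)) + 1 := by push_cast; ring
    rw [this, ← add_assoc]
    exact ih.trans hstep

lemma GCycle.verts_reach (c : GCycle s r) {u w : V} (hu : u ∈ c.verts)
    (hw : w ∈ c.verts) : Reach s r u w := by
  obtain ⟨i, rfl⟩ := hu
  obtain ⟨j, rfl⟩ := hw
  have := c.reach_add i (j - i).val
  rwa [Fin.cast_val_eq_self, add_sub_cancel] at this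

end helpers

section core
variable {V E : Type*} {s r : E → V}

/-- From a purely periodic orbit of an edge-selection function, extract a cycle. -/
lemma exists_cycle_of_periodic (g : V → E) (hg : ∀ v, s (g v) = v) (x : V)
    (m : ℕ) (hm : 0 < m) (hxm : (fun v => r (g v))^[m] x = x) :
    ∃ c : GCycle s r, x ∈ c.verts ∧ g x ∈ c.edges := by
  classical
  set f : V → V := fun v => r (g v) with hf
  have hex : ∃ p, 0 < p ∧ f^[p] x = x := ⟨m, hm, hxm⟩
  obtain ⟨hp0, hpx⟩ := Nat.find_spec hex
  set p := Nat.find hex with hp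
  obtain ⟨n, hn⟩ : ∃ n, p = n + 1 := ⟨p - 1, by omega⟩
  have hiter : ∀ a b : Fin (n + 1), a.val ≤ b.val →
      f^[a.val] x = f^[b.val] x → a = b := by
    intro a b hab heq
    by_contra hne
    have hlt : a.val < b.val := lt_of_le_of_ne hab (fun h => hne (Fin.ext h))
    have hb : b.val < p := by omega
    set q := p - b.val + a.val with hq
    have hq0 : 0 < q := by omega
    have hqp : q < p := by omega
    have h1 : f^[q] x = x := by
      rw [hq, Function.iterate_add_apply, heq, ← Function.iterate_add_apply]
      have : p - b.val + b.val = p := by omega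
      rw [this]; exact hpx
    exact Nat.find_min hex hqp ⟨hq0, h1⟩
  refine ⟨⟨n, fun i => g (f^[i.val] x), ?_, ?_, ?_⟩, ?_, ?_⟩
  · intro i
    show r (g (f^[i.castSucc.val] x)) = s (g (f^[i.succ.val] x))
    rw [hg]
    simp only [Fin.coe_castSucc, Fin.val_succ]
    exact (Function.iterate_succ_apply' f i.val x).symm
  · show f (f^[(Fin.last n).val] x) = s (g (f^[(0 : Fin (n+1)).val] x))
    rw [hg]
    simp only [Fin.val_last, Fin.val_zero, Function.iterate_zero_apply]
    rw [← Function.iterate_succ_apply' f n x, show n.succ = p from hn.symm]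
    exact hpx
  · intro i j hij
    simp only [hg] at hij
    rcases le_total i.val j.val with h | h
    · exact hiter i j h hij
    · exact (hiter j i h hij.symm).symm
  · exact ⟨0, by simp [hg]⟩
  · exact ⟨0, by simp⟩

lemma reach_iterate (g : V → E) (hg : ∀ v, s (g v) = v) (v : V) (k : ℕ) :
    Reach s r v ((fun v => r (g v))^[k] v) := by
  induction k with
  | zero => exact Relation.ReflTransGen.refl
  | succ k ih =>
    refine ih.tail ⟨g ((fun v => r (g v))^[k] v), hg _, ?_⟩
    rw [Function.iterate_succ_apply']

lemma exists_reach_cycle [Finite V] (hnosink : ∀ u : V, ∃ e : E, s e = u) (v : V) :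
    ∃ c : GCycle s r, ∃ w ∈ c.verts, Reach s r v w := by
  classical
  choose g hg using hnosink
  set f : V → V := fun v => r (g v) with hf
  obtain ⟨i, j, hne, heq⟩ :=
    Finite.exists_ne_map_eq_of_infinite (fun k : ℕ => f^[k] v)
  have key : ∀ i j : ℕ, i < j → f^[i] v = f^[j] v →
      ∃ c : GCycle s r, ∃ w ∈ c.verts, Reach s r v w := by
    intro i j hlt heq
    have hper : f^[j - i] (f^[i] v) = f^[i] v := by
      rw [← Function.iterate_add_apply]
      have : j - i + i = j := by omega
      rw [this]; exact heq.symm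
    obtain ⟨c, hx, -⟩ := exists_cycle_of_periodic g hg (f^[i] v) (j - i)
      (by omega) hper
    exact ⟨c, f^[i] v, hx, reach_iterate g hg v i⟩
  rcases hne.lt_or_gt with h | h
  · exact key i j h heq
  · exact key j i h heq.symm

/-- Paths of a fixed length. -/
def PathN (s r : E → V) : ℕ → V → V → Prop
  | 0, a, b => a = b
  | (n+1), a, b => ∃ e, s e = a ∧ PathN s r n (r e) b

lemma reach_iff_pathN {a b : V} : Reach s r a b ↔ ∃ n, PathN s r n a b := by
  constructor
  · intro h
    induction h using Relation.ReflTransGen.head_induction_on with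
    | refl => exact ⟨0, rfl⟩
    | head hstep _ ih =>
      obtain ⟨e, he1, he2⟩ := hstep
      obtain ⟨n, hp⟩ := ih
      exact ⟨n + 1, e, he1, he2 ▸ hp⟩
  · rintro ⟨n, hp⟩
    induction n generalizing a with
    | zero => exact hp ▸ Relation.ReflTransGen.refl
    | succ n ih =>
      obtain ⟨e, he1, he2⟩ := hp
      exact Relation.ReflTransGen.head ⟨e, he1, rfl⟩ (ih he2)

end core

section key
variable {V E : Type*} {s r : E → V}

/-- If an edge leaves a cycle vertex and its range can return to the cycle, then
(under the disjointness hypothesis) the edge belongs to the cycle. -/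
lemma edge_mem_of_return
    (hnosink : ∀ u : V, ∃ e : E, s e = u)
    (hdisj : ∀ c c' : GCycle s r, (c.verts ∩ c'.verts).Nonempty → c.edges = c'.edges)
    (c : GCycle s r) {x : V} {e : E} (hx : x ∈ c.verts) (hse : s e = x)
    (hreach : Reach s r (r e) x) : e ∈ c.edges := by
  classical
  -- distance to x
  let d : V → ℕ := fun v =>
    if h : ∃ n, PathN s r n v x then Nat.find h else 0
  have hg : ∀ v : V, ∃ e' : E, s e' = v ∧ (v = x → e' = e) ∧
      (v ≠ x → (∃ n, PathN s r n v x) →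
        (∃ n, PathN s r n (r e') x) ∧ d (r e') < d v) := by
    intro v
    by_cases hvx : v = x
    · exact ⟨e, hvx ▸ hse, fun _ => rfl, fun h => absurd hvx h⟩
    by_cases h : ∃ n, PathN s r n v x
    · have hd : d v = Nat.find h := by simp only [d, dif_pos h]
      have hp : PathN s r (Nat.find h) v x := Nat.find_spec h
      obtain ⟨k, hk⟩ : ∃ k, Nat.find h = k + 1 := by
        rcases Nat.eq_zero_or_pos (Nat.find h) with h0 | h0
        · rw [h0] at hp; exact absurd hp hvx
        · exact ⟨Nat.find h - 1, by omega⟩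
      rw [hk] at hp
      obtain ⟨e', he1, he2⟩ := hp
      refine ⟨e', he1, fun h' => absurd h' hvx, fun _ _ => ⟨⟨k, he2⟩, ?_⟩⟩
      have hd' : d (r e') ≤ k := by
        have hh : ∃ n, PathN s r n (r e') x := ⟨k, he2⟩
        simp only [d, dif_pos hh]
        exact Nat.find_le he2
      omega
    · obtain ⟨e', he'⟩ := hnosink v
      exact ⟨e', he', fun h' => absurd h' hvx, fun _ h' => absurd h' h⟩
  choose g hgs hgx hgd using hg
  -- termination: iterating g from anything reaching x hits x
  have hterm : ∀ N v, d v ≤ N → (∃ n, PathN s r n v x) →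
      ∃ k, (fun v => r (g v))^[k] v = x := by
    intro N
    induction N with
    | zero =>
      intro v hdv hv
      by_cases hvx : v = x
      · exact ⟨0, hvx⟩
      · obtain ⟨-, hlt⟩ := hgd v hvx hv
        omega
    | succ N ih =>
      intro v hdv hv
      by_cases hvx : v = x
      · exact ⟨0, hvx⟩
      · obtain ⟨hv', hlt⟩ := hgd v hvx hv
        obtain ⟨k, hk⟩ := ih (r (g v)) (by omega) hv'
        exact ⟨k + 1, by rw [Function.iterate_succ_apply]; exact hk⟩
  obtain ⟨n0, hn0⟩ := reach_iff_pathN.1 hreach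
  obtain ⟨k, hk⟩ := hterm (d (r e)) (r e) le_rfl ⟨n0, hn0⟩
  have hfx : (fun v => r (g v))^[k + 1] x = x := by
    rw [Function.iterate_succ_apply]
    have : r (g x) = r e := by rw [hgx x rfl]
    rw [this]; exact hk
  obtain ⟨c', hxc', hec'⟩ := exists_cycle_of_periodic g hgs x (k + 1)
    (Nat.succ_pos k) hfx
  rw [hgx x rfl] at hec'
  rw [← hdisj c' c ⟨x, hxc', hx⟩]
  exact hec'

/-- If `u` lies on a cycle, `u` reaches `w` and `w` reaches `u`, then `w` lies on the
same cycle. -/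
lemma mem_verts_of_reach_of_reach
    (hnosink : ∀ u : V, ∃ e : E, s e = u)
    (hdisj : ∀ c c' : GCycle s r, (c.verts ∩ c'.verts).Nonempty → c.edges = c'.edges)
    (c : GCycle s r) {u w : V} (hu : u ∈ c.verts) (huw : Reach s r u w)
    (hwu : Reach s r w u) : w ∈ c.verts := by
  induction huw with
  | refl => exact hu
  | @tail b w' hab hbw ih =>
    have hwu' : Reach s r b u := Relation.ReflTransGen.head hbw hwu
    have hb : b ∈ c.verts := ih hwu'
    obtain ⟨e, hse, hre⟩ := hbw
    have he : e ∈ c.edges := by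
      refine edge_mem_of_return hnosink hdisj c hb hse ?_
      rw [hre]
      exact hwu.trans (c.verts_reach hu hb)
    rw [← hre]
    exact (c.mem_verts_of_mem_edges he).2

end key

/-- In a finite graph with no sinks in which no two distinct cycles share a vertex,
the relation `c ≥ c'` is a partial order on cycles (reflexive, transitive, and
antisymmetric up to rotation), every minimal cycle has no exits, and in particular
there exists a cycle without exits. -/
theorem cycle_order_and_no_exit_cycle {V E : Type*} [Fintype V] [Fintype E]
    [Nonempty V] (s r : E → V)
    (hnosink : ∀ u : V, ∃ e : E, s e = u)
    (hdisj : ∀ c c' : GCycle s r, (c.verts ∩ c'.verts).Nonempty → c.edges = c'.edges) :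
    (∀ c : GCycle s r, CycGe c c) ∧
    (∀ c₁ c₂ c₃ : GCycle s r, CycGe c₁ c₂ → CycGe c₂ c₃ → CycGe c₁ c₃) ∧
    (∀ c c' : GCycle s r, CycGe c c' → CycGe c' c → c.edges = c'.edges) ∧
    (∀ c : GCycle s r, (∀ c' : GCycle s r, CycGe c c' → c'.edges = c.edges) →
      ∀ f : E, s f ∈ c.verts → f ∈ c.edges) ∧
    (∃ c : GCycle s r, ∀ f : E, s f ∈ c.verts → f ∈ c.edges) := by

  classical
  have refl : ∀ c : GCycle s r, CycGe c c := fun c =>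
    ⟨s (c.es 0), ⟨0, rfl⟩, s (c.es 0), ⟨0, rfl⟩, Relation.ReflTransGen.refl⟩
  have trans : ∀ c₁ c₂ c₃ : GCycle s r, CycGe c₁ c₂ → CycGe c₂ c₃ → CycGe c₁ c₃ := by
    rintro c₁ c₂ c₃ ⟨u, hu, w, hw, h1⟩ ⟨u', hu', w', hw', h2⟩
    exact ⟨u, hu, w', hw', h1.trans ((c₂.verts_reach hw hu').trans h2)⟩
  have antisym : ∀ c c' : GCycle s r, CycGe c c' → CycGe c' c →
      c.edges = c'.edges := by
    rintro c c' ⟨u, hu, w, hw, h1⟩ ⟨u', hu', w', hw', h2⟩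
    have hwu : Reach s r w u :=
      (c'.verts_reach hw hu').trans (h2.trans (c.verts_reach hw' hu))
    have hwc : w ∈ c.verts :=
      mem_verts_of_reach_of_reach hnosink hdisj c hu h1 hwu
    exact hdisj c c' ⟨w, hwc, hw⟩
  have minmax : ∀ c : GCycle s r,
      (∀ c' : GCycle s r, CycGe c c' → c'.edges = c.edges) →
      ∀ f : E, s f ∈ c.verts → f ∈ c.edges := by
    intro c hmin f hf
    obtain ⟨c'', w, hw, hr⟩ := exists_reach_cycle hnosink (r f)
    have hge : CycGe c c'' :=
      ⟨s f, hf, w, hw, Relation.ReflTransGen.head ⟨f, rfl, rfl⟩ hr⟩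
    have he := hmin c'' hge
    have hverts : c''.verts = c.verts := by
      rw [c''.verts_eq, c.verts_eq, he]
    rw [hverts] at hw
    exact edge_mem_of_return hnosink hdisj c hf rfl
      (hr.trans (c.verts_reach hw hf))
  refine ⟨refl, trans, antisym, minmax, ?_⟩
  -- find a minimal cycle
  obtain ⟨c₀, -, -⟩ := exists_reach_cycle (s := s) (r := r) hnosink (Classical.arbitrary V)
  let F : GCycle s r → Finset V := fun c =>
    (Set.toFinite {v | ∃ u ∈ c.verts, Reach s r u v}).toFinset
  let S : Set ℕ := {k | ∃ c : GCycle s r, (F c).card = k}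
  have hS : S.Nonempty := ⟨(F c₀).card, c₀, rfl⟩
  obtain ⟨c, hc⟩ := Nat.sInf_mem hS
  have hmin' : ∀ c' : GCycle s r, (F c).card ≤ (F c').card := fun c' =>
    hc ▸ Nat.sInf_le ⟨c', rfl⟩
  have hminGe : ∀ c' : GCycle s r, CycGe c c' → CycGe c' c := by
    rintro c' ⟨u, hu, w, hw, h1⟩
    have hsub : F c' ⊆ F c := by
      intro v hv
      simp only [F, Set.Finite.mem_toFinset, Set.mem_setOf_eq] at hv ⊢
      obtain ⟨w', hw', hv⟩ := hv
      exact ⟨u, hu, h1.trans ((c'.verts_reach hw hw').trans hv)⟩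
    have heq : F c' = F c := Finset.eq_of_subset_of_card_le hsub (hmin' c')
    have hu' : u ∈ F c := by
      simp only [F, Set.Finite.mem_toFinset, Set.mem_setOf_eq]
      exact ⟨u, hu, Relation.ReflTransGen.refl⟩
    rw [← heq] at hu'
    simp only [F, Set.Finite.mem_toFinset, Set.mem_setOf_eq] at hu'
    obtain ⟨w', hw', hru⟩ := hu'
    exact ⟨w', hw', u, hu, hru⟩
  exact ⟨c, minmax c (fun c' h => (antisym c c' h (hminGe c' h)).symm)⟩
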